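/- Let X and Y be pseudometric spaces, f : X → Y a map, and ξ : X, η : Y base points with f ξ = η. Then f is proper at the base point (the preimage of every bounded subset of Y containing η is bounded in X) if and only if the preimage of FIN(Y,η) under *f is contained in FIN(X,ξ), i.e. for every x : *X, *f x ∈ FIN(Y,η) implies x ∈ FIN(X,ξ). -/

import Mathlib

open Filter

/-- The nonstandard extension `*S` of a type `S`, realised as germs along the
hyperfilter on `ℕ` (a nonprincipal ultrafilter). -/
abbrev St (S : Type*) : Type _ := Filter.Germ (↑(Filter.hyperfilter ℕ) : Filter ℕ) S

/-- `*d`, the componentwise lift of the distance to the nonstandard extension. -/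
noncomputable def starDist {X : Type*} [PseudoMetricSpace X] (x y : St X) : St ℝ :=
  Filter.Germ.map₂ dist x y

/-- `x ∼ y` : two points of `*X` are finitely close if `*d x y ≤ *r` for some real `r`. -/
def FinClose {X : Type*} [PseudoMetricSpace X] (x y : St X) : Prop :=
  ∃ r : ℝ, starDist x y ≤ (↑r : St ℝ)

/-- `FIN(X,ξ)` : the points of `*X` finitely close to the base point. -/
def FIN {X : Type*} [PseudoMetricSpace X] (ξ : X) : Set (St X) :=
  {x | FinClose x (↑ξ : St X)}

/-- `INF(X,ξ)` : the infinite points of `*X` relative to the base point. -/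
def INF {X : Type*} [PseudoMetricSpace X] (ξ : X) : Set (St X) :=
  {x | ¬ FinClose x (↑ξ : St X)}

/-- A subset of a pseudometric space is bounded. -/
def BoundedSet {X : Type*} [PseudoMetricSpace X] (B : Set X) : Prop :=
  ∃ r : ℝ, ∀ a ∈ B, ∀ b ∈ B, dist a b ≤ r

/-- A map of pseudometric spaces is bornologous. -/
def Bornologous {X Y : Type*} [PseudoMetricSpace X] [PseudoMetricSpace Y] (f : X → Y) : Prop :=
  ∀ r : ℝ, ∃ s : ℝ, ∀ x x' : X, dist x x' ≤ r → dist (f x) (f x') ≤ s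

/-- `f` is proper at the base point `η`: preimages of bounded sets containing `η`
are bounded. -/
def ProperAt {X Y : Type*} [PseudoMetricSpace X] [PseudoMetricSpace Y]
    (f : X → Y) (η : Y) : Prop :=
  ∀ B : Set Y, η ∈ B → BoundedSet B → BoundedSet (f ⁻¹' B)

/-- `(N, s)` is an internal hyperfinite chain in `B ⊆ *X` from `x` to `y`. -/
def InternalChain {X : Type*} [PseudoMetricSpace X] (B : Set (St X)) (x y : St X)
    (N : ℕ → ℕ) (s : ℕ → ℕ → X) : Prop :=
  (↑(fun n => s n 0) : St X) = x ∧
  (↑(fun n => s n (N n)) : St X) = y ∧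
  (∀ g : ℕ → ℕ, (∀ᶠ n in (↑(Filter.hyperfilter ℕ) : Filter ℕ), g n ≤ N n) →
    (↑(fun n => s n (g n)) : St X) ∈ B) ∧
  (∀ g : ℕ → ℕ, (∀ᶠ n in (↑(Filter.hyperfilter ℕ) : Filter ℕ), g n < N n) →
    FinClose (↑(fun n => s n (g n)) : St X) (↑(fun n => s n (g n + 1)) : St X))

/-- `B ⊆ *X` is macrochain-connected. -/
def MacroChainConnected {X : Type*} [PseudoMetricSpace X] (B : Set (St X)) : Prop :=
  ∀ x ∈ B, ∀ y ∈ B, ∃ N s, InternalChain B x y N s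

/-- `x ≡ι y` : `x` and `y` are joined by an internal hyperfinite chain lying in `INF(X,ξ)`. -/
def IotaEquiv {X : Type*} [PseudoMetricSpace X] (ξ : X) (x y : St X) : Prop :=
  ∃ N s, InternalChain (INF ξ) x y N s

/-- An element of `*ℕ` is infinite. -/
def InfiniteHypernat (i : St ℕ) : Prop := ∀ m : ℕ, ¬ i ≤ (↑m : St ℕ)

/-- A coarse sequence : a bornologous and proper map `ℕ → X`. -/
def CoarseSeq {X : Type*} [PseudoMetricSpace X] (s : ℕ → X) : Prop :=
  (∀ k : ℕ, ∃ r : ℝ, ∀ m n : ℕ, Nat.dist m n ≤ k → dist (s m) (s n) ≤ r) ∧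
  (∀ B : Set X, BoundedSet B → (s ⁻¹' B).Finite)

/-- `s ⊑ t` for coarse sequences : `s` is a subsequence of `t`. -/
def SubCoarse {X : Type*} [PseudoMetricSpace X] (s t : ℕ → X) : Prop :=
  CoarseSeq s ∧ CoarseSeq t ∧ ∃ κ : ℕ → ℕ, StrictMono κ ∧ s = t ∘ κ

/-- `s ≡σ t` : the equivalence relation generated by `⊑` on coarse sequences. -/
def SigmaEquiv {X : Type*} [PseudoMetricSpace X] (s t : ℕ → X) : Prop :=
  Relation.EqvGen SubCoarse s t

/-- `(X, ξ)` is non-scattering at infinity. -/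
def NonScattering {X : Type*} [PseudoMetricSpace X] (ξ : X) : Prop :=
  ∃ r : ℝ, ∀ A : Set X, ξ ∈ A → BoundedSet A →
    ∀ x ∈ Aᶜ, ∀ y ∈ Aᶜ, ∃ n : ℕ, ∃ c : ℕ → X, c 0 = x ∧ c n = y ∧
      (∀ i ≤ n, c i ∈ Aᶜ) ∧ (∀ i < n, dist (c i) (c (i + 1)) ≤ r)
/-- A pointed map is proper at the base point iff `*f ⁻¹ (FIN(Y,η)) ⊆ FIN(X,ξ)`. -/
theorem properAt_iff_preimage_FIN {X Y : Type*} [PseudoMetricSpace X] [PseudoMetricSpace Y]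
    (f : X → Y) (ξ : X) (η : Y) (hf : f ξ = η) :
    ProperAt f η ↔ ∀ x : St X, x.map f ∈ FIN η → x ∈ FIN ξ := by
  constructor
  · intro hp x hx
    induction x using Filter.Germ.inductionOn with
    | h u =>
      obtain ⟨r, hr⟩ := hx
      rw [Filter.Germ.map_coe] at hr
      have hr' : ∀ᶠ n in (↑(Filter.hyperfilter ℕ) : Filter ℕ),
          dist (f (u n)) η ≤ max r 0 := by
        have h2 : starDist (↑(f ∘ u) : St Y) (↑η : St Y) =
            (↑(fun n => dist (f (u n)) η) : St ℝ) := by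
          simp [starDist, Filter.Germ.map₂_coe]; rfl
        rw [h2] at hr
        have := Filter.Germ.coe_le.mp hr
        filter_upwards [this] with n hn using hn.trans (le_max_left _ _)
      set B := Metric.closedBall η (max r 0) with hB
      have hηB : η ∈ B := Metric.mem_closedBall_self (le_max_right _ _)
      have hBb : BoundedSet B := by
        refine ⟨2 * max r 0, fun a ha b hb => ?_⟩
        have := dist_triangle a η b
        rw [Metric.mem_closedBall] at ha hb
        rw [dist_comm] at hb
        linarith
      obtain ⟨s, hs⟩ := hp B hηB hBb
      have hξ : ξ ∈ f ⁻¹' B := by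
        simp [Set.mem_preimage, hf, hηB]
      refine ⟨s, ?_⟩
      have h3 : starDist (↑u : St X) (↑ξ : St X) =
          (↑(fun n => dist (u n) ξ) : St ℝ) := by
        simp [starDist, Filter.Germ.map₂_coe]; rfl
      rw [h3]
      refine Filter.Germ.coe_le.mpr ?_
      filter_upwards [hr'] with n hn
      exact hs (u n) (Metric.mem_closedBall.mpr hn) ξ hξ
  · intro h B hηB hBb
    by_contra hne
    simp only [BoundedSet, not_exists, not_forall] at hne
    have hξ : ξ ∈ f ⁻¹' B := by simp [Set.mem_preimage, hf, hηB]
    have key : ∀ n : ℕ, ∃ c ∈ f ⁻¹' B, (n : ℝ) < dist c ξ := by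
      intro n
      obtain ⟨a, ha, b, hb, hab⟩ := hne (2 * n)
      push_neg at hab
      rcases le_or_gt (dist a ξ) n with h1 | h1
      · refine ⟨b, hb, ?_⟩
        have := dist_triangle a ξ b
        rw [dist_comm b ξ]; linarith [dist_comm ξ b ▸ this]
      · exact ⟨a, ha, h1⟩
    choose c hc hc' using key
    have hx : (↑c : St X).map f ∈ FIN η := by
      obtain ⟨r, hr⟩ := hBb
      refine ⟨r, ?_⟩
      rw [Filter.Germ.map_coe]
      have h2 : starDist (↑(f ∘ c) : St Y) (↑η : St Y) =
          (↑(fun n => dist (f (c n)) η) : St ℝ) := by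
        simp [starDist, Filter.Germ.map₂_coe]; rfl
      rw [h2]
      exact Filter.Germ.coe_le.mpr (Filter.Eventually.of_forall fun n => hr _ (hc n) _ hηB)
    obtain ⟨s, hs⟩ := h _ hx
    have h3 : starDist (↑c : St X) (↑ξ : St X) =
        (↑(fun n => dist (c n) ξ) : St ℝ) := by
      simp [starDist, Filter.Germ.map₂_coe]; rfl
    rw [h3] at hs
    have hs' := Filter.Germ.coe_le.mp hs
    have hfin : {n : ℕ | dist (c n) ξ ≤ s}.Finite := by
      apply Set.Finite.subset (Set.finite_Iic ⌈s⌉₊)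
      intro n hn
      simp only [Set.mem_setOf_eq] at hn
      simp only [Set.mem_Iic]
      by_contra hlt
      push_neg at hlt
      have : (n : ℝ) > s := lt_of_le_of_lt (Nat.le_ceil s) (by exact_mod_cast hlt)
      linarith [hc' n]
    exact hfin.notMem_hyperfilter hs'
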